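/- Under the su(N) generator hypotheses, the Dirac matrices in the Dirac representation, and the Grassmann setup, the axial-vector Fierz identity for U(N) fermions holds: Σ_{a : Fin (N^2−1)} Σ_{μ} ε μ • ⟪γ5 * γ μ, T a⟫ * ⟪γ5 * γ μ, T a⟫ = (1/2) • ⟪1⟫ * ⟪1⟫ + (1/4) • Σ_{μ} ε μ • ⟪γ μ⟫ * ⟪γ μ⟫ + ((N−2)/(4·N)) • Σ_{μ} ε μ • ⟪γ5 * γ μ⟫ * ⟪γ5 * γ μ⟫ − (1/2) • ⟪γ5⟫ * ⟪γ5⟫, where μ ranges over Fin 4. -/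

import Mathlib

noncomputable section

open Complex Matrix

/-- The Dirac γ-matrices in the Dirac representation. -/
def γm : Fin 4 → Matrix (Fin 4) (Fin 4) ℂ :=
  ![!![1,0,0,0; 0,1,0,0; 0,0,-1,0; 0,0,0,-1],
    !![0,0,0,1; 0,0,1,0; 0,-1,0,0; -1,0,0,0],
    !![0,0,0,-I; 0,0,I,0; 0,I,0,0; -I,0,0,0],
    !![0,0,1,0; 0,0,0,-1; -1,0,0,0; 0,1,0,0]]

/-- γ⁵ = i·γ⁰γ¹γ²γ³. -/
def γ5 : Matrix (Fin 4) (Fin 4) ℂ := I • (γm 0 * γm 1 * γm 2 * γm 3)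

/-- σ^{μν} = (i/2)[γ^μ, γ^ν]. -/
def σm (μ ν : Fin 4) : Matrix (Fin 4) (Fin 4) ℂ := (I / 2) • (γm μ * γm ν - γm ν * γm μ)

/-- The metric signs ε 0 = 1, ε 1 = ε 2 = ε 3 = −1 used to raise/lower indices. -/
def εs : Fin 4 → ℤ := ![1, -1, -1, -1]

/-- The totally antisymmetric Levi-Civita symbol on four indices,
normalized by ε₄ 0 1 2 3 = 1. -/
def ε4 (κ l μ ν : Fin 4) : ℤ :=
  Matrix.det (Matrix.of fun p q : Fin 4 => if ![κ, l, μ, ν] p = q then (1 : ℤ) else 0)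

/-- The Grassmann algebra generated by the 8N fermion components:
the exterior algebra of the direct sum of two copies of (Fin 4 × Fin N) → ℂ. -/
abbrev GrassAlg (N : ℕ) :=
  ExteriorAlgebra ℂ (((Fin 4 × Fin N) → ℂ) × ((Fin 4 × Fin N) → ℂ))

/-- ψ (A, i): the image in the Grassmann algebra of the standard basis vector
of the first summand indexed by (A, i). -/
def ψv (N : ℕ) (A : Fin 4) (i : Fin N) : GrassAlg N :=
  ExteriorAlgebra.ι ℂ (Pi.single (A, i) 1, 0)

/-- ψ̄ (A, i): the image in the Grassmann algebra of the standard basis vector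
of the second summand indexed by (A, i). -/
def ψbar (N : ℕ) (A : Fin 4) (i : Fin N) : GrassAlg N :=
  ExteriorAlgebra.ι ℂ (0, Pi.single (A, i) 1)

/-- The fermion bilinear B Γ i j = ∑_{A,B} Γ A B · ψ̄ (A,i) ψ (B,j). -/
def Bgr (N : ℕ) (Γ : Matrix (Fin 4) (Fin 4) ℂ) (i j : Fin N) : GrassAlg N :=
  ∑ A : Fin 4, ∑ B : Fin 4, Γ A B • (ψbar N A i * ψv N B j)

/-- ⟪Γ, X⟫ = ∑_{i,j} X i j · B Γ i j, the bilinear with Dirac structure Γ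
and color structure X. -/
def pairing (N : ℕ) (Γ : Matrix (Fin 4) (Fin 4) ℂ)
    (X : Matrix (Fin N) (Fin N) ℂ) : GrassAlg N :=
  ∑ i : Fin N, ∑ j : Fin N, X i j • Bgr N Γ i j

/-- ⟪Γ⟫ = ⟪Γ, 1⟫, the color-singlet bilinear. -/
def sing (N : ℕ) (Γ : Matrix (Fin 4) (Fin 4) ℂ) : GrassAlg N := pairing N Γ 1

/-! ### Auxiliary: explicit matrix computations -/

private lemma fzH01 : γm 0 * γm 1 = !![0,0,0,1; 0,0,1,0; 0,1,0,0; 1,0,0,0] := by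
  ext i j
  fin_cases i <;> fin_cases j <;>
    simp [γm, Matrix.mul_apply, Fin.sum_univ_four, Matrix.vecHead, Matrix.vecTail]

private lemma fzH23 : γm 2 * γm 3 = !![0,-I,0,0; -I,0,0,0; 0,0,0,-I; 0,0,-I,0] := by
  ext i j
  fin_cases i <;> fin_cases j <;>
    simp [γm, Matrix.mul_apply, Fin.sum_univ_four, Matrix.vecHead, Matrix.vecTail]

/-- γ⁵ as an explicit matrix. -/
def fzG5 : Matrix (Fin 4) (Fin 4) ℂ := !![0,0,1,0; 0,0,0,1; 1,0,0,0; 0,1,0,0]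

private lemma fzG5_eq : γ5 = fzG5 := by
  rw [γ5, mul_assoc, fzH01, fzH23, fzG5]
  ext i j
  fin_cases i <;> fin_cases j <;>
    simp [Matrix.mul_apply, Fin.sum_univ_four, Matrix.vecHead, Matrix.vecTail]

/-- γ⁵γ^μ as explicit matrices. -/
def fzGax : Fin 4 → Matrix (Fin 4) (Fin 4) ℂ :=
  ![!![0,0,-1,0; 0,0,0,-1; 1,0,0,0; 0,1,0,0],
    !![0,-1,0,0; -1,0,0,0; 0,0,0,1; 0,0,1,0],
    !![0,I,0,0; -I,0,0,0; 0,0,0,-I; 0,0,I,0],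
    !![-1,0,0,0; 0,1,0,0; 0,0,1,0; 0,0,0,-1]]

private lemma fzGax_eq : ∀ μ, γ5 * γm μ = fzGax μ := by
  intro μ
  ext i j
  fin_cases μ <;> fin_cases i <;> fin_cases j <;>
    simp [fzG5_eq, fzG5, fzGax, γm, Matrix.mul_apply, Fin.sum_univ_four,
      Matrix.vecHead, Matrix.vecTail]

set_option maxHeartbeats 8000000 in
private lemma fierz_scalar_aux : ∀ A B C D : Fin 4,
    ∑ μ : Fin 4, (εs μ : ℂ) * (fzGax μ A B * fzGax μ C D)
    = -((1 : Matrix (Fin 4) (Fin 4) ℂ) A D * (1 : Matrix (Fin 4) (Fin 4) ℂ) C B)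
      - (1/2) * ∑ μ : Fin 4, (εs μ:ℂ) * (γm μ A D * γm μ C B)
      - (1/2) * ∑ μ : Fin 4, (εs μ:ℂ) * (fzGax μ A D * fzGax μ C B)
      + fzG5 A D * fzG5 C B := by
  intro A B C D
  fin_cases A <;> fin_cases B <;> fin_cases C <;> fin_cases D <;>
    simp [Fin.sum_univ_four, fzGax, γm, fzG5, εs, Matrix.one_apply, Matrix.vecHead,
      Matrix.vecTail] <;>
    ring_nf <;> simp [Complex.I_sq] <;> ring

private lemma fierz_scalar : ∀ A B C D : Fin 4,
    ∑ μ : Fin 4, (εs μ : ℂ) * ((γ5 * γm μ) A B * (γ5 * γm μ) C D)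
    = -((1 : Matrix (Fin 4) (Fin 4) ℂ) A D * (1 : Matrix (Fin 4) (Fin 4) ℂ) C B)
      - (1/2) * ∑ μ : Fin 4, (εs μ:ℂ) * (γm μ A D * γm μ C B)
      - (1/2) * ∑ μ : Fin 4, (εs μ:ℂ) * ((γ5 * γm μ) A D * (γ5 * γm μ) C B)
      + γ5 A D * γ5 C B := by
  intro A B C D
  simp only [fzGax_eq]
  simp only [fzG5_eq]
  exact fierz_scalar_aux A B C D

private lemma color_complete (N : ℕ) (hN : 2 ≤ N)
    (T : Fin (N ^ 2 - 1) → Matrix (Fin N) (Fin N) ℂ)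
    (htr : ∀ a, (T a).trace = 0)
    (horth : ∀ a b, (T a * T b).trace = if a = b then (1 / 2 : ℂ) else 0)
    (i j k l : Fin N) :
    ∑ a, T a i j * T a k l
      = (1/2 : ℂ) * ((if i = l then 1 else 0) * (if j = k then (1:ℂ) else 0))
        - (1/(2*(N:ℂ))) * ((if i = j then 1 else 0) * (if k = l then (1:ℂ) else 0)) := by
  have hN0 : (N : ℂ) ≠ 0 := Nat.cast_ne_zero.mpr (by omega)
  set v : Option (Fin (N ^ 2 - 1)) → Matrix (Fin N) (Fin N) ℂ :=
    fun o => o.elim (1 : Matrix (Fin N) (Fin N) ℂ) T with hv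
  have hind : LinearIndependent ℂ v := by
    rw [Fintype.linearIndependent_iff]
    intro g hg
    have hb : ∀ b, g (some b) = 0 := by
      intro b
      have h1 : ((∑ o, g o • v o) * T b).trace = 0 := by rw [hg, zero_mul, trace_zero]
      rw [Finset.sum_mul, trace_sum] at h1
      simp only [smul_mul_assoc, trace_smul] at h1
      rw [Fintype.sum_option] at h1
      simp only [hv, Option.elim, one_mul, htr, horth, smul_eq_mul, mul_zero, zero_add] at h1
      simp only [mul_ite, mul_zero] at h1
      rw [Finset.sum_ite_eq' Finset.univ b (fun x => g (some x) * (1/2))] at h1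
      simpa using h1
    intro o
    match o with
    | some b => exact hb b
    | none =>
      have h2 : (∑ o, g o • v o).trace = 0 := by rw [hg, trace_zero]
      rw [trace_sum] at h2
      simp only [trace_smul] at h2
      rw [Fintype.sum_option] at h2
      simp only [hv, Option.elim, htr, trace_one, smul_eq_mul, mul_zero,
        Finset.sum_const_zero, add_zero] at h2
      have : (Fintype.card (Fin N) : ℂ) ≠ 0 := by simpa using hN0
      field_simp at h2
      exact (mul_eq_zero.mp h2).resolve_right this
  have hcard : Fintype.card (Option (Fin (N ^ 2 - 1))) =
      Module.finrank ℂ (Matrix (Fin N) (Fin N) ℂ) := by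
    rw [Module.finrank_matrix]
    simp only [Fintype.card_option, Fintype.card_fin, Module.finrank_self, mul_one]
    have h1 : 1 ≤ N ^ 2 := Nat.one_le_pow 2 N (by omega)
    rw [show N * N = N ^ 2 from (sq N).symm]
    omega
  have hspan := hind.span_eq_top_of_card_eq_finrank hcard
  -- completeness
  have hP : ∀ X : Matrix (Fin N) (Fin N) ℂ,
      (∑ a, (2 * (X * T a).trace) • T a) + (X.trace / N) • (1 : Matrix (Fin N) (Fin N) ℂ) = X := by
    intro X
    have hX : X ∈ Submodule.span ℂ (Set.range v) := by rw [hspan]; trivial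
    induction hX using Submodule.span_induction with
    | mem x hx =>
      obtain ⟨o, rfl⟩ := hx
      match o with
      | none =>
        simp only [hv, Option.elim, one_mul, htr, mul_zero, zero_smul,
          Finset.sum_const_zero, zero_add, trace_one, Fintype.card_fin]
        rw [div_self hN0, one_smul]
      | some b =>
        simp only [hv, Option.elim, horth, htr, zero_div, zero_smul, add_zero]
        rw [Finset.sum_congr rfl (fun a _ => by
          rw [show (2 * if b = a then (1/2 : ℂ) else 0) = if b = a then 1 else 0 by
            split <;> norm_num])]
        simp [ite_smul]
    | zero => simp
    | add x y hx hy ihx ihy =>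
      have e1 : ∀ a : Fin (N ^ 2 - 1), (2 * (((x + y) * T a).trace)) • T a
          = (2 * ((x * T a).trace)) • T a + (2 * ((y * T a).trace)) • T a := by
        intro a; rw [add_mul, trace_add, mul_add, add_smul]
      rw [Finset.sum_congr rfl (fun a _ => e1 a), Finset.sum_add_distrib, trace_add, add_div,
        add_smul]
      have : ∀ u1 u2 w1 w2 : Matrix (Fin N) (Fin N) ℂ,
          u1 + u2 + (w1 + w2) = (u1 + w1) + (u2 + w2) := by intros; abel
      rw [this, ihx, ihy]
    | smul c x hx ih =>
      have e1 : ∀ a : Fin (N ^ 2 - 1), (2 * (((c • x) * T a).trace)) • T a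
          = c • ((2 * ((x * T a).trace)) • T a) := by
        intro a
        rw [smul_mul_assoc, trace_smul, smul_eq_mul, smul_smul]
        congr 1; ring
      rw [Finset.sum_congr rfl (fun a _ => e1 a), ← Finset.smul_sum, trace_smul, smul_eq_mul,
        mul_div_assoc, mul_smul, ← smul_add, ih]
  -- apply to a std basis matrix
  have key0 := hP (Matrix.single l k (1:ℂ))
  have htrE : ∀ M : Matrix (Fin N) (Fin N) ℂ, (Matrix.single l k (1:ℂ) * M).trace = M k l := by
    intro M
    simp [Matrix.trace, Matrix.diag, Matrix.mul_apply, Matrix.single, Matrix.of_apply,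
      ite_and, Finset.sum_ite_eq]
  have htrE2 : (Matrix.single l k (1:ℂ)).trace = if l = k then 1 else 0 := by
    rw [Matrix.trace]
    by_cases h : l = k
    · subst h
      simp [Matrix.diag, Matrix.single, Matrix.of_apply, Finset.sum_ite_eq]
    · rw [if_neg h]
      apply Finset.sum_eq_zero
      intro p _
      simp only [Matrix.diag, Matrix.single, Matrix.of_apply]
      exact if_neg (fun hh => h (hh.1.trans hh.2.symm))
  rw [Finset.sum_congr rfl (fun a _ => by rw [htrE (T a)]), htrE2] at key0
  have key := congr_fun (congr_fun key0 i) j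
  simp only [Matrix.add_apply, Matrix.sum_apply, Matrix.smul_apply, smul_eq_mul,
    Matrix.one_apply, Matrix.single, Matrix.of_apply] at key
  have sw : ∀ p q : Fin N, (if p = q then (1:ℂ) else 0) = (if q = p then 1 else 0) := by
    intro p q
    by_cases h : p = q
    · simp [h]
    · rw [if_neg h, if_neg (fun hh => h hh.symm)]
  rw [sw i l, sw j k, sw k l]
  have hsum : ∑ a, 2 * T a k l * T a i j = 2 * ∑ a, T a i j * T a k l := by
    rw [Finset.mul_sum]; exact Finset.sum_congr rfl (fun a _ => by ring)
  rw [show (if l = i ∧ k = j then (1:ℂ) else 0) =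
      (if l = i then 1 else 0) * (if k = j then 1 else 0) by
    by_cases h1 : l = i <;> by_cases h2 : k = j <;> simp [h1, h2]] at key
  rw [hsum] at key
  linear_combination key / 2
section Helpers


variable {V : Type*} [AddCommGroup V] [Module ℂ V]

lemma iota_swap (x y : V) :
    ExteriorAlgebra.ι ℂ x * ExteriorAlgebra.ι ℂ y
      = -(ExteriorAlgebra.ι ℂ y * ExteriorAlgebra.ι ℂ x) :=
  eq_neg_of_add_eq_zero_left (ExteriorAlgebra.ι_add_mul_swap x y)

lemma quad (x y z w : V) :
    (ExteriorAlgebra.ι ℂ x * ExteriorAlgebra.ι ℂ y) *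
      (ExteriorAlgebra.ι ℂ z * ExteriorAlgebra.ι ℂ w)
    = -((ExteriorAlgebra.ι ℂ x * ExteriorAlgebra.ι ℂ w) *
        (ExteriorAlgebra.ι ℂ z * ExteriorAlgebra.ι ℂ y)) := by
  have h : ExteriorAlgebra.ι ℂ y * (ExteriorAlgebra.ι ℂ z * ExteriorAlgebra.ι ℂ w)
      = -(ExteriorAlgebra.ι ℂ w * (ExteriorAlgebra.ι ℂ z * ExteriorAlgebra.ι ℂ y)) := by
    rw [iota_swap z w, mul_neg, ← mul_assoc, iota_swap y w, neg_mul, neg_neg, mul_assoc,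
      iota_swap y z, mul_neg]
  rw [mul_assoc, h, mul_neg, ← mul_assoc]

lemma sum_in4 {ι κ₁ κ₂ κ₃ κ₄ β : Type*} [Fintype ι] [Fintype κ₁] [Fintype κ₂] [Fintype κ₃]
    [Fintype κ₄] [AddCommMonoid β] (f : ι → κ₁ → κ₂ → κ₃ → κ₄ → β) :
    ∑ x : ι, ∑ A : κ₁, ∑ B : κ₂, ∑ C : κ₃, ∑ D : κ₄, f x A B C D
      = ∑ A : κ₁, ∑ B : κ₂, ∑ C : κ₃, ∑ D : κ₄, ∑ x : ι, f x A B C D := by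
  rw [Finset.sum_comm]
  refine Finset.sum_congr rfl fun A _ => ?_
  rw [Finset.sum_comm]
  refine Finset.sum_congr rfl fun B _ => ?_
  rw [Finset.sum_comm]
  refine Finset.sum_congr rfl fun C _ => Finset.sum_comm

lemma sum_rev3 {κ β : Type*} [Fintype κ] [AddCommMonoid β] (h : κ → κ → κ → β) :
    ∑ B : κ, ∑ C : κ, ∑ D : κ, h B C D = ∑ D : κ, ∑ C : κ, ∑ B : κ, h B C D := by
  calc ∑ B : κ, ∑ C : κ, ∑ D : κ, h B C D
      = ∑ B : κ, ∑ D : κ, ∑ C : κ, h B C D :=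
        Finset.sum_congr rfl fun B _ => Finset.sum_comm
    _ = ∑ D : κ, ∑ B : κ, ∑ C : κ, h B C D := Finset.sum_comm
    _ = ∑ D : κ, ∑ C : κ, ∑ B : κ, h B C D :=
        Finset.sum_congr rfl fun D _ => Finset.sum_comm

end Helpers

variable (N : ℕ)

/-- color-singlet Dirac-bilinear building block -/
def MM (A B : Fin 4) : GrassAlg N := ∑ i : Fin N, ψbar N A i * ψv N B i

lemma smul_MM (c : ℂ) (A B C D : Fin 4) :
    ∑ i : Fin N, ∑ k : Fin N,
        c • ((ψbar N A i * ψv N B i) * (ψbar N C k * ψv N D k))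
      = c • (MM N A B * MM N C D) := by
  rw [MM, MM, Finset.sum_mul_sum, Finset.smul_sum]
  exact Finset.sum_congr rfl fun i _ => (Finset.smul_sum).symm

lemma quad_psi (A B C D : Fin 4) (i j k l : Fin N) :
    (ψbar N A i * ψv N B j) * (ψbar N C k * ψv N D l)
      = -((ψbar N A i * ψv N D l) * (ψbar N C k * ψv N B j)) :=
  quad _ _ _ _

lemma Bgr_mul (Γ Γ' : Matrix (Fin 4) (Fin 4) ℂ) (i j k l : Fin N) :
    Bgr N Γ i j * Bgr N Γ' k l
      = ∑ A : Fin 4, ∑ B : Fin 4, ∑ C : Fin 4, ∑ D : Fin 4,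
          (Γ A B * Γ' C D) • ((ψbar N A i * ψv N B j) * (ψbar N C k * ψv N D l)) := by
  rw [Bgr, Bgr, Finset.sum_mul_sum]
  rw [Finset.sum_congr rfl fun A _ => Finset.sum_congr rfl fun C _ =>
    Finset.sum_mul_sum Finset.univ Finset.univ _ _]
  rw [Finset.sum_congr rfl fun A (_ : A ∈ Finset.univ) => Finset.sum_comm]
  simp only [smul_mul_assoc, mul_smul_comm, smul_smul]
  exact Finset.sum_congr rfl fun A _ => Finset.sum_congr rfl fun B _ =>
    Finset.sum_congr rfl fun C _ => Finset.sum_congr rfl fun D _ => by rw [mul_comm]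

lemma sing_eq : ∀ Γ : Matrix (Fin 4) (Fin 4) ℂ, sing N Γ = ∑ i : Fin N, Bgr N Γ i i := by
  intro Γ
  simp only [sing, pairing, Matrix.one_apply, ite_smul, one_smul, zero_smul,
    Finset.sum_ite_eq, Finset.mem_univ, if_true]

lemma sing_mul_sing (Γ Γ' : Matrix (Fin 4) (Fin 4) ℂ) :
    sing N Γ * sing N Γ'
      = ∑ A : Fin 4, ∑ B : Fin 4, ∑ C : Fin 4, ∑ D : Fin 4,
          (Γ A B * Γ' C D) • (MM N A B * MM N C D) := by
  rw [sing_eq, sing_eq, Finset.sum_mul_sum]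
  have step : ∀ i k : Fin N, Bgr N Γ i i * Bgr N Γ' k k
      = ∑ A : Fin 4, ∑ B : Fin 4, ∑ C : Fin 4, ∑ D : Fin 4,
          (Γ A B * Γ' C D) • ((ψbar N A i * ψv N B i) * (ψbar N C k * ψv N D k)) :=
    fun i k => Bgr_mul N Γ Γ' i i k k
  rw [Finset.sum_congr rfl fun i _ => Finset.sum_congr rfl fun k _ => step i k]
  -- move the i,k sums inside
  rw [Finset.sum_congr rfl fun i _ =>
    sum_in4 (fun k A B C D => (Γ A B * Γ' C D) •
      ((ψbar N A i * ψv N B i) * (ψbar N C k * ψv N D k)))]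
  rw [sum_in4 (fun i A B C D => ∑ k : Fin N, (Γ A B * Γ' C D) •
      ((ψbar N A i * ψv N B i) * (ψbar N C k * ψv N D k)))]
  refine Finset.sum_congr rfl fun A _ => Finset.sum_congr rfl fun B _ =>
    Finset.sum_congr rfl fun C _ => Finset.sum_congr rfl fun D _ => ?_
  exact smul_MM N _ A B C D

/-- the crossed color contraction, Fierz-reordered -/
lemma cross_eq (Γ Γ' : Matrix (Fin 4) (Fin 4) ℂ) :
    ∑ i : Fin N, ∑ k : Fin N, Bgr N Γ i k * Bgr N Γ' k i
      = -∑ A : Fin 4, ∑ B : Fin 4, ∑ C : Fin 4, ∑ D : Fin 4,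
          (Γ A B * Γ' C D) • (MM N A D * MM N C B) := by
  have step : ∀ i k : Fin N, Bgr N Γ i k * Bgr N Γ' k i
      = ∑ A : Fin 4, ∑ B : Fin 4, ∑ C : Fin 4, ∑ D : Fin 4,
          (-((Γ A B * Γ' C D) • ((ψbar N A i * ψv N D i) * (ψbar N C k * ψv N B k)))) := by
    intro i k
    rw [Bgr_mul N Γ Γ' i k k i]
    refine Finset.sum_congr rfl fun A _ => Finset.sum_congr rfl fun B _ =>
      Finset.sum_congr rfl fun C _ => Finset.sum_congr rfl fun D _ => ?_
    rw [quad_psi, smul_neg]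
  rw [Finset.sum_congr rfl fun i _ => Finset.sum_congr rfl fun k _ => step i k]
  simp only [Finset.sum_neg_distrib]
  rw [neg_inj]
  rw [Finset.sum_congr rfl fun i _ =>
    sum_in4 (fun k A B C D => (Γ A B * Γ' C D) •
      ((ψbar N A i * ψv N D i) * (ψbar N C k * ψv N B k)))]
  rw [sum_in4 (fun i A B C D => ∑ k : Fin N, (Γ A B * Γ' C D) •
      ((ψbar N A i * ψv N D i) * (ψbar N C k * ψv N B k)))]
  refine Finset.sum_congr rfl fun A _ => Finset.sum_congr rfl fun B _ =>
    Finset.sum_congr rfl fun C _ => Finset.sum_congr rfl fun D _ => ?_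
  exact smul_MM N _ A D C B


lemma pair_mul (Γ Γ' : Matrix (Fin 4) (Fin 4) ℂ) (X Y : Matrix (Fin N) (Fin N) ℂ) :
    pairing N Γ X * pairing N Γ' Y
      = ∑ i : Fin N, ∑ j : Fin N, ∑ k : Fin N, ∑ l : Fin N,
          (X i j * Y k l) • (Bgr N Γ i j * Bgr N Γ' k l) := by
  rw [pairing, pairing, Finset.sum_mul_sum]
  rw [Finset.sum_congr rfl fun i _ => Finset.sum_congr rfl fun k _ =>
    Finset.sum_mul_sum Finset.univ Finset.univ _ _]
  rw [Finset.sum_congr rfl fun i (_ : i ∈ Finset.univ) => Finset.sum_comm]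
  simp only [smul_mul_assoc, mul_smul_comm, smul_smul]
  exact Finset.sum_congr rfl fun i _ => Finset.sum_congr rfl fun j _ =>
    Finset.sum_congr rfl fun k _ => Finset.sum_congr rfl fun l _ => by rw [mul_comm]

lemma sing_mul_sing' (Γ Γ' : Matrix (Fin 4) (Fin 4) ℂ) :
    sing N Γ * sing N Γ' = ∑ i : Fin N, ∑ k : Fin N, Bgr N Γ i i * Bgr N Γ' k k := by
  rw [sing_eq, sing_eq, Finset.sum_mul_sum]

lemma color_reduce (hN : 2 ≤ N)
    (T : Fin (N ^ 2 - 1) → Matrix (Fin N) (Fin N) ℂ)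
    (hcc : ∀ i j k l : Fin N, ∑ a, T a i j * T a k l
      = (1/2 : ℂ) * ((if i = l then 1 else 0) * (if j = k then (1:ℂ) else 0))
        - (1/(2*(N:ℂ))) * ((if i = j then 1 else 0) * (if k = l then (1:ℂ) else 0)))
    (Γ Γ' : Matrix (Fin 4) (Fin 4) ℂ) :
    ∑ a, pairing N Γ (T a) * pairing N Γ' (T a)
      = (1/2 : ℂ) • (∑ i : Fin N, ∑ k : Fin N, Bgr N Γ i k * Bgr N Γ' k i)
        - (1/(2*(N:ℂ))) • (sing N Γ * sing N Γ') := by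
  rw [Finset.sum_congr rfl fun a _ => pair_mul N Γ Γ' (T a) (T a)]
  rw [sum_in4 (fun a i j k l => (T a i j * T a k l) •
    (Bgr N Γ i j * Bgr N Γ' k l))]
  have inner : ∀ i j k l : Fin N,
      (∑ a, (T a i j * T a k l) • (Bgr N Γ i j * Bgr N Γ' k l))
        = ((1/2 : ℂ) * ((if i = l then 1 else 0) * (if j = k then (1:ℂ) else 0))) •
            (Bgr N Γ i j * Bgr N Γ' k l)
          - ((1/(2*(N:ℂ))) * ((if i = j then 1 else 0) * (if k = l then (1:ℂ) else 0))) •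
            (Bgr N Γ i j * Bgr N Γ' k l) := by
    intro i j k l
    rw [← Finset.sum_smul, hcc i j k l, sub_smul]
  rw [Finset.sum_congr rfl fun i _ => Finset.sum_congr rfl fun j _ =>
    Finset.sum_congr rfl fun k _ => Finset.sum_congr rfl fun l _ => inner i j k l]
  simp only [Finset.sum_sub_distrib]
  congr 1
  · -- crossed piece
    have e1 : ∀ i j k l : Fin N,
        ((1/2 : ℂ) * ((if i = l then 1 else 0) * (if j = k then (1:ℂ) else 0))) •
            (Bgr N Γ i j * Bgr N Γ' k l)
          = if i = l then (if j = k then (1/2 : ℂ) • (Bgr N Γ i j * Bgr N Γ' k l) else 0)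
            else 0 := by
      intro i j k l
      by_cases h1 : i = l <;> by_cases h2 : j = k <;> simp [h1, h2]
    rw [Finset.sum_congr rfl fun i _ => Finset.sum_congr rfl fun j _ =>
      Finset.sum_congr rfl fun k _ => Finset.sum_congr rfl fun l _ => e1 i j k l]
    rw [Finset.sum_congr rfl fun i _ => Finset.sum_congr rfl fun j _ =>
      Finset.sum_congr rfl fun k _ =>
        Finset.sum_ite_eq Finset.univ i
          (fun l => if j = k then (1/2 : ℂ) • (Bgr N Γ i j * Bgr N Γ' k l) else 0)]
    simp only [Finset.mem_univ, if_true]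
    rw [Finset.sum_congr rfl fun i _ => Finset.sum_congr rfl fun j _ =>
        Finset.sum_ite_eq Finset.univ j
          (fun k => (1/2 : ℂ) • (Bgr N Γ i j * Bgr N Γ' k i))]
    simp only [Finset.mem_univ, if_true]
    rw [Finset.smul_sum]
    exact Finset.sum_congr rfl fun i _ => (Finset.smul_sum).symm
  · -- singlet piece
    have e2 : ∀ i j k l : Fin N,
        ((1/(2*(N:ℂ))) * ((if i = j then 1 else 0) * (if k = l then (1:ℂ) else 0))) •
            (Bgr N Γ i j * Bgr N Γ' k l)
          = if k = l then (if i = j then (1/(2*(N:ℂ))) • (Bgr N Γ i j * Bgr N Γ' k l) else 0)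
            else 0 := by
      intro i j k l
      by_cases h1 : i = j <;> by_cases h2 : k = l <;> simp [h1, h2]
    rw [Finset.sum_congr rfl fun i _ => Finset.sum_congr rfl fun j _ =>
      Finset.sum_congr rfl fun k _ => Finset.sum_congr rfl fun l _ => e2 i j k l]
    rw [Finset.sum_congr rfl fun i _ => Finset.sum_congr rfl fun j _ =>
      Finset.sum_congr rfl fun k _ =>
        Finset.sum_ite_eq Finset.univ k
          (fun l => if i = j then (1/(2*(N:ℂ))) • (Bgr N Γ i j * Bgr N Γ' k l) else 0)]
    simp only [Finset.mem_univ, if_true]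
    rw [Finset.sum_congr rfl fun i (_ : i ∈ Finset.univ) => Finset.sum_comm]
    rw [Finset.sum_congr rfl fun i _ => Finset.sum_congr rfl fun k _ =>
        Finset.sum_ite_eq Finset.univ i
          (fun j => (1/(2*(N:ℂ))) • (Bgr N Γ i j * Bgr N Γ' k k))]
    simp only [Finset.mem_univ, if_true]
    rw [sing_mul_sing', Finset.smul_sum]
    exact Finset.sum_congr rfl fun i _ => (Finset.smul_sum).symm

lemma sing_mul_sing_rev (X Y : Matrix (Fin 4) (Fin 4) ℂ) :
    ∑ A : Fin 4, ∑ B : Fin 4, ∑ C : Fin 4, ∑ D : Fin 4,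
        (X A D * Y C B) • (MM N A D * MM N C B)
      = sing N X * sing N Y := by
  rw [sing_mul_sing]
  exact Finset.sum_congr rfl fun A _ =>
    sum_rev3 (fun B C D => (X A D * Y C B) • (MM N A D * MM N C B))

lemma expand_smul_sum_sing (c : ℂ) (ε : Fin 4 → ℂ) (F : Fin 4 → Matrix (Fin 4) (Fin 4) ℂ) :
    ∑ A : Fin 4, ∑ B : Fin 4, ∑ C : Fin 4, ∑ D : Fin 4,
        (c * ∑ μ : Fin 4, ε μ * (F μ A D * F μ C B)) • (MM N A D * MM N C B)
      = c • ∑ μ : Fin 4, ε μ • (sing N (F μ) * sing N (F μ)) := by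
  simp only [Finset.mul_sum, Finset.sum_smul]
  rw [← sum_in4 (fun μ A B C D => (c * (ε μ * (F μ A D * F μ C B))) • (MM N A D * MM N C B))]
  rw [Finset.smul_sum]
  refine Finset.sum_congr rfl fun μ _ => ?_
  simp only [mul_smul]
  simp only [← Finset.smul_sum]
  conv_rhs => rw [← sing_mul_sing_rev N (F μ) (F μ)]
  simp only [smul_smul]

lemma fierz_rearrange (ε : Fin 4 → ℂ) (G gm : Fin 4 → Matrix (Fin 4) (Fin 4) ℂ)
    (g5 : Matrix (Fin 4) (Fin 4) ℂ)
    (hfz : ∀ A B C D : Fin 4,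
      ∑ μ : Fin 4, ε μ * (G μ A B * G μ C D)
      = -((1 : Matrix (Fin 4) (Fin 4) ℂ) A D * (1 : Matrix (Fin 4) (Fin 4) ℂ) C B)
        - (1/2) * ∑ μ : Fin 4, ε μ * (gm μ A D * gm μ C B)
        - (1/2) * ∑ μ : Fin 4, ε μ * (G μ A D * G μ C B)
        + g5 A D * g5 C B) :
    ∑ μ : Fin 4, ε μ • (∑ i : Fin N, ∑ k : Fin N, Bgr N (G μ) i k * Bgr N (G μ) k i)
      = sing N 1 * sing N 1
        + (1/2 : ℂ) • ∑ μ : Fin 4, ε μ • (sing N (gm μ) * sing N (gm μ))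
        + (1/2 : ℂ) • ∑ μ : Fin 4, ε μ • (sing N (G μ) * sing N (G μ))
        - sing N g5 * sing N g5 := by
  rw [Finset.sum_congr rfl fun μ _ => congrArg (fun z => ε μ • z) (cross_eq N (G μ) (G μ))]
  simp only [smul_neg, Finset.smul_sum, smul_smul]
  simp only [Finset.sum_neg_distrib]
  rw [sum_in4 (fun μ A B C D =>
    (ε μ * (G μ A B * G μ C D)) • (MM N A D * MM N C B))]
  rw [Finset.sum_congr rfl fun A _ => Finset.sum_congr rfl fun B _ =>
    Finset.sum_congr rfl fun C _ => Finset.sum_congr rfl fun D _ => by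
      rw [← Finset.sum_smul, hfz A B C D]]
  simp only [sub_smul, add_smul, neg_smul, Finset.sum_add_distrib, Finset.sum_sub_distrib,
    Finset.sum_neg_distrib]
  rw [sing_mul_sing_rev N 1 1, sing_mul_sing_rev N g5 g5,
    expand_smul_sum_sing N (1/2 : ℂ) ε gm, expand_smul_sum_sing N (1/2 : ℂ) ε G]
  simp only [Finset.smul_sum, smul_smul]
  abel

/-- **Axial-vector Fierz identity for U(N) fermions.** -/
theorem fierz_axial (N : ℕ) (hN : 2 ≤ N)
    (T : Fin (N ^ 2 - 1) → Matrix (Fin N) (Fin N) ℂ)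
    (htr : ∀ a, (T a).trace = 0)
    (hherm : ∀ a, (T a)ᴴ = T a)
    (horth : ∀ a b, (T a * T b).trace = if a = b then (1 / 2 : ℂ) else 0) :
    ∑ a, ∑ μ, (εs μ : ℂ) •
        (pairing N (γ5 * γm μ) (T a) * pairing N (γ5 * γm μ) (T a)) =
      (1 / 2 : ℂ) • (sing N 1 * sing N 1)
        + (1 / 4 : ℂ) • ∑ μ, (εs μ : ℂ) • (sing N (γm μ) * sing N (γm μ))
        + (((N : ℂ) - 2) / (4 * (N : ℂ))) • ∑ μ, (εs μ : ℂ) •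
            (sing N (γ5 * γm μ) * sing N (γ5 * γm μ))
        - (1 / 2 : ℂ) • (sing N γ5 * sing N γ5) := by
  have hcc := color_complete N hN T htr horth
  rw [Finset.sum_comm]
  rw [Finset.sum_congr rfl fun μ _ => (Finset.smul_sum (r := ((εs μ : ℤ) : ℂ))
      (f := fun a => pairing N (γ5 * γm μ) (T a) * pairing N (γ5 * γm μ) (T a))).symm]
  rw [Finset.sum_congr rfl fun μ _ => congrArg (fun z => ((εs μ : ℤ) : ℂ) • z)
      (color_reduce N hN T hcc (γ5 * γm μ) (γ5 * γm μ))]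
  simp only [smul_sub]
  rw [Finset.sum_sub_distrib]
  rw [Finset.sum_congr rfl fun μ (_ : μ ∈ Finset.univ) =>
      smul_comm ((εs μ : ℤ) : ℂ) (1/2 : ℂ)
        (∑ i : Fin N, ∑ k : Fin N, Bgr N (γ5 * γm μ) i k * Bgr N (γ5 * γm μ) k i)]
  rw [Finset.sum_congr rfl fun μ (_ : μ ∈ Finset.univ) =>
      smul_comm ((εs μ : ℤ) : ℂ) (1/(2*(N:ℂ)))
        (sing N (γ5 * γm μ) * sing N (γ5 * γm μ))]
  rw [← Finset.smul_sum, ← Finset.smul_sum]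
  rw [fierz_rearrange N (fun μ => ((εs μ : ℤ) : ℂ)) (fun μ => γ5 * γm μ) γm γ5 fierz_scalar]
  have hN0 : (N : ℂ) ≠ 0 := Nat.cast_ne_zero.mpr (by omega)
  have hsplit : (((N : ℂ) - 2) / (4 * (N : ℂ))) •
        (∑ μ : Fin 4, ((εs μ : ℤ) : ℂ) • (sing N (γ5 * γm μ) * sing N (γ5 * γm μ)))
      = ((1:ℂ)/2) • (((1:ℂ)/2) •
          ∑ μ : Fin 4, ((εs μ : ℤ) : ℂ) • (sing N (γ5 * γm μ) * sing N (γ5 * γm μ)))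
        - (1/(2*(N:ℂ))) •
          ∑ μ : Fin 4, ((εs μ : ℤ) : ℂ) • (sing N (γ5 * γm μ) * sing N (γ5 * γm μ)) := by
    rw [smul_smul, ← sub_smul]
    congr 1
    field_simp
    ring
  rw [hsplit]
  simp only [smul_add, smul_sub, smul_smul]
  rw [show ((1:ℂ)/2 * (1/2)) = ((1:ℂ)/4) by norm_num]
  abel
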